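/- Let P : ℤ → SL(2,ℝ) satisfy sup_{i∈ℤ} ‖P(i)‖ < ∞. Then P is uniformly hyperbolic if and only if P admits a dominated splitting. -/

import Mathlib

open Matrix

noncomputable section

/-- Euclidean plane. -/
abbrev E2 := EuclideanSpace ℝ (Fin 2)

/-- The real projective line, as the projectivization of `ℝ²`. -/
abbrev RP1 := Projectivization ℝ E2

/-- The linear map on `E2` induced by a `2×2` matrix. -/
def matLin (A : Matrix (Fin 2) (Fin 2) ℝ) : E2 →ₗ[ℝ] E2 :=
  (WithLp.linearEquiv 2 ℝ (Fin 2 → ℝ)).symm.toLinearMap ∘ₗ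
    A.mulVecLin ∘ₗ (WithLp.linearEquiv 2 ℝ (Fin 2 → ℝ)).toLinearMap

/-- Matrix-vector multiplication on `E2`. -/
def mulVecE (A : Matrix (Fin 2) (Fin 2) ℝ) (v : E2) : E2 := matLin A v

/-- The action of an (invertible) matrix on the projective line `RP1`
(junk value if the matrix is not injective). -/
def matAct (A : Matrix (Fin 2) (Fin 2) ℝ) (x : RP1) : RP1 :=
  open scoped Classical in
  if h : Function.Injective (matLin A) then Projectivization.map (matLin A) h x else x

/-- The (Euclidean) operator norm of a `2×2` matrix. -/
def matOpNorm (A : Matrix (Fin 2) (Fin 2) ℝ) : ℝ :=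
  ‖LinearMap.toContinuousLinearMap (matLin A)‖

/-- The metric `d([u],[w]) = √(1 − (⟨u,w⟩/(‖u‖‖w‖))²)` on `RP1`. -/
def projDist (x y : RP1) : ℝ :=
  Real.sqrt (1 - ((inner ℝ x.rep y.rep : ℝ) / (‖x.rep‖ * ‖y.rep‖)) ^ 2)

/-- Forward cocycle iterates: `fwd A n i = A(i+n−1)⋯A(i)`. -/
def fwd (A : ℤ → Matrix (Fin 2) (Fin 2) ℝ) : ℕ → ℤ → Matrix (Fin 2) (Fin 2) ℝ
  | 0, _ => 1
  | n + 1, i => A (i + n) * fwd A n i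

/-- Backward cocycle iterates: `bwd A n i = A(i−n)⁻¹⋯A(i−1)⁻¹`. -/
def bwd (A : ℤ → Matrix (Fin 2) (Fin 2) ℝ) : ℕ → ℤ → Matrix (Fin 2) (Fin 2) ℝ
  | 0, _ => 1
  | n + 1, i => bwd A n (i - 1) * (A (i - 1))⁻¹

/-- `w` is a nonzero vector spanning the line `x ∈ RP1`. -/
def SpansLine (w : E2) (x : RP1) : Prop := ∃ h : w ≠ 0, Projectivization.mk ℝ w h = x

/-- Uniform hyperbolicity witnessed by unstable/stable directions `u`, `s`. -/
def IsUHWith (P : ℤ → Matrix (Fin 2) (Fin 2) ℝ) (u s : ℤ → RP1) : Prop :=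
  (∀ i : ℤ, matAct (P i) (u i) = u (i + 1) ∧ matAct (P i) (s i) = s (i + 1)) ∧
  ∃ C > 0, ∃ η > 1, ∀ i : ℤ, ∀ n : ℕ,
    (∀ w : E2, ‖w‖ = 1 → SpansLine w (u i) → ‖mulVecE (bwd P n i) w‖ ≤ C / η ^ n) ∧
    (∀ w : E2, ‖w‖ = 1 → SpansLine w (s i) → ‖mulVecE (fwd P n i) w‖ ≤ C / η ^ n)

/-- Uniform hyperbolicity of a cocycle. -/
def IsUH (P : ℤ → Matrix (Fin 2) (Fin 2) ℝ) : Prop := ∃ u s, IsUHWith P u s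

/-- Dominated splitting (DS1)–(DS4). -/
def IsDS (T : ℤ → Matrix (Fin 2) (Fin 2) ℝ) : Prop :=
  ∃ u s : ℤ → RP1,
    (∀ i : ℤ, matAct (T i) (u i) = u (i + 1) ∧ matAct (T i) (s i) = s (i + 1)) ∧
    ∃ N : ℕ, 1 ≤ N ∧
      (∃ η > 1, ∀ i : ℤ, ∀ w w' : E2, ‖w‖ = 1 → ‖w'‖ = 1 →
        SpansLine w (u i) → SpansLine w' (s i) →
        ‖mulVecE (fwd T N i) w‖ > η * ‖mulVecE (fwd T N i) w'‖) ∧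
      (∃ δ > 0, ∀ i : ℤ, projDist (u i) (s i) > δ) ∧
      (∃ c > 0, ∀ i : ℤ, c ≤ matOpNorm (fwd T N i))

-- ## basic lemmas
lemma matLin_mul (A B : Matrix (Fin 2) (Fin 2) ℝ) : matLin (A*B) = (matLin A) ∘ₗ (matLin B) := by
  ext v j; simp [matLin, Matrix.mulVec_mulVec]

lemma matLin_one : matLin 1 = LinearMap.id := by ext v j; simp [matLin]

lemma mulVecE_mul (A B : Matrix (Fin 2) (Fin 2) ℝ) (v : E2) :
    mulVecE (A*B) v = mulVecE A (mulVecE B v) := by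
  simp [mulVecE, matLin_mul]

lemma mulVecE_one (v : E2) : mulVecE 1 v = v := by simp [mulVecE, matLin_one]

lemma mulVecE_smul (A : Matrix (Fin 2) (Fin 2) ℝ) (c : ℝ) (v : E2) :
    mulVecE A (c • v) = c • mulVecE A v := by simp [mulVecE]

lemma mulVecE_sub (A : Matrix (Fin 2) (Fin 2) ℝ) (v w : E2) :
    mulVecE A (v - w) = mulVecE A v - mulVecE A w := by simp [mulVecE]

lemma matLin_leftInverse {A : Matrix (Fin 2) (Fin 2) ℝ} (h : IsUnit A.det) (v : E2) :
    mulVecE A⁻¹ (mulVecE A v) = v := by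
  rw [← mulVecE_mul, Matrix.nonsing_inv_mul A h, mulVecE_one]

lemma matLin_injective {A : Matrix (Fin 2) (Fin 2) ℝ} (h : IsUnit A.det) :
    Function.Injective (matLin A) :=
  Function.LeftInverse.injective (g := matLin A⁻¹) (fun v => matLin_leftInverse h v)

lemma mulVecE_ne_zero {A : Matrix (Fin 2) (Fin 2) ℝ} (h : IsUnit A.det) {v : E2} (hv : v ≠ 0) :
    mulVecE A v ≠ 0 := by
  intro hz
  exact hv (matLin_injective h (by simpa [mulVecE] using hz))

lemma matAct_mk {A : Matrix (Fin 2) (Fin 2) ℝ} (h : IsUnit A.det) (w : E2) (hw : w ≠ 0) :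
    matAct A (Projectivization.mk ℝ w hw) = Projectivization.mk ℝ (mulVecE A w)
      (mulVecE_ne_zero h hw) := by
  rw [matAct, dif_pos (matLin_injective h)]
  rfl

lemma matAct_mul {A B : Matrix (Fin 2) (Fin 2) ℝ} (hA : IsUnit A.det) (hB : IsUnit B.det)
    (x : RP1) : matAct (A*B) x = matAct A (matAct B x) := by
  induction x using Projectivization.ind with
  | h w hw =>
    have hAB : IsUnit (A*B).det := by rw [Matrix.det_mul]; exact hA.mul hB
    rw [matAct_mk hAB, matAct_mk hB, matAct_mk hA]
    simp_rw [mulVecE_mul]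

-- norms
lemma norm_mulVecE_le (A : Matrix (Fin 2) (Fin 2) ℝ) (v : E2) :
    ‖mulVecE A v‖ ≤ matOpNorm A * ‖v‖ :=
  (LinearMap.toContinuousLinearMap (matLin A)).le_opNorm v

lemma matOpNorm_nonneg (A : Matrix (Fin 2) (Fin 2) ℝ) : 0 ≤ matOpNorm A := norm_nonneg _

lemma matOpNorm_le_bound (A : Matrix (Fin 2) (Fin 2) ℝ) {c : ℝ} (hc : 0 ≤ c)
    (h : ∀ v : E2, ‖mulVecE A v‖ ≤ c * ‖v‖) : matOpNorm A ≤ c :=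
  ContinuousLinearMap.opNorm_le_bound _ hc h

lemma matOpNorm_mul_le (A B : Matrix (Fin 2) (Fin 2) ℝ) :
    matOpNorm (A*B) ≤ matOpNorm A * matOpNorm B := by
  apply matOpNorm_le_bound _ (mul_nonneg (matOpNorm_nonneg A) (matOpNorm_nonneg B))
  intro v
  rw [mulVecE_mul, mul_assoc]
  exact (norm_mulVecE_le A _).trans (by
    have := norm_mulVecE_le B v
    nlinarith [matOpNorm_nonneg A, norm_nonneg (mulVecE B v)])

lemma norm_le_matOpNorm {A : Matrix (Fin 2) (Fin 2) ℝ} {v : E2} (hv : ‖v‖ = 1) :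
    ‖mulVecE A v‖ ≤ matOpNorm A := by
  simpa [hv] using norm_mulVecE_le A v


lemma norm_sq_E2 (v : E2) : ‖v‖^2 = v 0^2 + v 1^2 := by
  rw [EuclideanSpace.norm_eq, Real.sq_sqrt (by positivity)]
  simp [Fin.sum_univ_two, sq_abs]

lemma inner_E2 (v w : E2) : (inner ℝ v w : ℝ) = v 0 * w 0 + v 1 * w 1 := by
  simp [PiLp.inner_apply, Fin.sum_univ_two]; ring

def Ddet (v w : E2) : ℝ := v 0 * w 1 - v 1 * w 0

lemma lagrange (v w : E2) : Ddet v w ^ 2 + (inner ℝ v w : ℝ) ^ 2 = ‖v‖^2 * ‖w‖^2 := by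
  rw [norm_sq_E2, norm_sq_E2, inner_E2, Ddet]; ring

lemma abs_Ddet_le (v w : E2) : |Ddet v w| ≤ ‖v‖ * ‖w‖ := by
  have h := lagrange v w
  have h2 : Ddet v w ^ 2 ≤ (‖v‖ * ‖w‖)^2 := by nlinarith [sq_nonneg (inner ℝ v w : ℝ)]
  rw [← sq_abs] at h2
  nlinarith [abs_nonneg (Ddet v w), mul_nonneg (norm_nonneg v) (norm_nonneg w)]

lemma mulVecE_apply (A : Matrix (Fin 2) (Fin 2) ℝ) (v : E2) (j : Fin 2) :
    mulVecE A v j = A j 0 * v 0 + A j 1 * v 1 := by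
  show A.mulVec v j = _
  simp [Matrix.mulVec, dotProduct, Fin.sum_univ_two]

lemma smul_apply_E2 (c : ℝ) (v : E2) (j : Fin 2) : (c • v) j = c * v j := rfl

lemma Ddet_smul_left (c : ℝ) (v w : E2) : Ddet (c • v) w = c * Ddet v w := by
  simp [Ddet, smul_apply_E2]; ring

lemma Ddet_smul_right (c : ℝ) (v w : E2) : Ddet v (c • w) = c * Ddet v w := by
  simp [Ddet, smul_apply_E2]; ring

lemma Ddet_mulVecE (A : Matrix (Fin 2) (Fin 2) ℝ) (v w : E2) :
    Ddet (mulVecE A v) (mulVecE A w) = A.det * Ddet v w := by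
  simp only [Ddet, mulVecE_apply, Matrix.det_fin_two]; ring

/-- the rotate-by-90° of a vector -/
def perpE (v : E2) : E2 := (WithLp.equiv 2 (Fin 2 → ℝ)).symm ![-(v 1), v 0]

lemma perpE_0 (v : E2) : perpE v 0 = -(v 1) := rfl
lemma perpE_1 (v : E2) : perpE v 1 = v 0 := rfl

lemma norm_perpE (v : E2) : ‖perpE v‖ = ‖v‖ := by
  have h1 := norm_sq_E2 v
  have h2 := norm_sq_E2 (perpE v)
  rw [perpE_0, perpE_1] at h2
  nlinarith [norm_nonneg v, norm_nonneg (perpE v)]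

lemma Ddet_perpE (v : E2) : Ddet v (perpE v) = ‖v‖^2 := by
  rw [Ddet, perpE_0, perpE_1, norm_sq_E2]; ring

/-- SL₂ lower bound on unit vectors: `‖A w‖ ≥ 1/‖A‖`. -/
lemma one_le_matOpNorm_mul_norm {A : Matrix (Fin 2) (Fin 2) ℝ} (hd : A.det = 1)
    {w : E2} (hw : ‖w‖ = 1) : 1 ≤ matOpNorm A * ‖mulVecE A w‖ := by
  have key : Ddet (mulVecE A w) (mulVecE A (perpE w)) = 1 := by
    rw [Ddet_mulVecE, hd, one_mul]
    have := Ddet_perpE w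
    rw [hw] at this; simpa using this
  have h1 : (1:ℝ) ≤ ‖mulVecE A w‖ * ‖mulVecE A (perpE w)‖ := by
    calc (1:ℝ) = |Ddet (mulVecE A w) (mulVecE A (perpE w))| := by rw [key]; simp
    _ ≤ _ := abs_Ddet_le _ _
  have h2 : ‖mulVecE A (perpE w)‖ ≤ matOpNorm A := by
    have := norm_mulVecE_le A (perpE w)
    rwa [norm_perpE, hw, mul_one] at this
  nlinarith [norm_nonneg (mulVecE A w)]


lemma spansLine_rep (x : RP1) : SpansLine x.rep x := ⟨x.rep_nonzero, x.mk_rep⟩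

lemma spansLine_smul {w : E2} {x : RP1} (h : SpansLine w x) {c : ℝ} (hc : c ≠ 0) :
    SpansLine (c • w) x := by
  obtain ⟨hw, rfl⟩ := h
  exact ⟨smul_ne_zero hc hw, by
    rw [Projectivization.mk_eq_mk_iff']
    exact ⟨c, rfl⟩⟩

def unitOf (x : RP1) : E2 := ‖x.rep‖⁻¹ • x.rep

lemma norm_unitOf (x : RP1) : ‖unitOf x‖ = 1 := by
  rw [unitOf, norm_smul, norm_inv, norm_norm,
    inv_mul_cancel₀ (norm_ne_zero_iff.mpr x.rep_nonzero)]

lemma spansLine_unitOf (x : RP1) : SpansLine (unitOf x) x :=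
  spansLine_smul (spansLine_rep x) (inv_ne_zero (norm_ne_zero_iff.mpr x.rep_nonzero))

lemma spansLine_pair {w w' : E2} {x : RP1} (h : SpansLine w x) (h' : SpansLine w' x) :
    ∃ c : ℝ, c ≠ 0 ∧ w = c • w' := by
  obtain ⟨hw, hmk⟩ := h
  obtain ⟨hw', hmk'⟩ := h'
  rw [← hmk'] at hmk
  obtain ⟨c, hc⟩ := (Projectivization.mk_eq_mk_iff' ℝ w w' hw hw').1 hmk
  refine ⟨c, fun h0 => hw ?_, hc.symm⟩
  rw [← hc, h0, zero_smul]

lemma spansLine_pair_unit {w w' : E2} {x : RP1} (h : SpansLine w x) (h' : SpansLine w' x)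
    (h1 : ‖w‖ = 1) (h1' : ‖w'‖ = 1) : ∃ c : ℝ, |c| = 1 ∧ w = c • w' := by
  obtain ⟨c, hc0, hc⟩ := spansLine_pair h h'
  refine ⟨c, ?_, hc⟩
  have := congrArg norm hc
  rw [h1, norm_smul, h1', mul_one, Real.norm_eq_abs] at this
  exact this.symm

lemma projDist_eq_abs_Ddet {x y : RP1} {w w' : E2} (hw : SpansLine w x) (hw' : SpansLine w' y)
    (h1 : ‖w‖ = 1) (h1' : ‖w'‖ = 1) : projDist x y = |Ddet w w'| := by
  obtain ⟨c, hc0, rfl⟩ := spansLine_pair hw (spansLine_rep x)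
  obtain ⟨c', hc0', rfl⟩ := spansLine_pair hw' (spansLine_rep y)
  have hx0 : ‖x.rep‖ ≠ 0 := norm_ne_zero_iff.mpr x.rep_nonzero
  have hy0 : ‖y.rep‖ ≠ 0 := norm_ne_zero_iff.mpr y.rep_nonzero
  have hcx : |c| * ‖x.rep‖ = 1 := by rw [← Real.norm_eq_abs, ← norm_smul, h1]
  have hcy : |c'| * ‖y.rep‖ = 1 := by rw [← Real.norm_eq_abs, ← norm_smul, h1']
  have hc2 : c^2 * ‖x.rep‖^2 = 1 := by nlinarith [hcx, sq_abs c, sq_nonneg (|c| * ‖x.rep‖)]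
  have hc2' : c'^2 * ‖y.rep‖^2 = 1 := by nlinarith [hcy, sq_abs c', sq_nonneg (|c'| * ‖y.rep‖)]
  have key : ((inner ℝ x.rep y.rep : ℝ) / (‖x.rep‖ * ‖y.rep‖))^2
      = (inner ℝ (c • x.rep) (c' • y.rep) : ℝ)^2 := by
    rw [real_inner_smul_left, real_inner_smul_right, div_pow]
    rw [div_eq_iff (by positivity)]
    linear_combination (-( (inner ℝ x.rep y.rep : ℝ)^2) * (c'^2 * ‖y.rep‖^2)) * hc2
      + (-((inner ℝ x.rep y.rep : ℝ)^2)) * hc2'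
  rw [projDist, key]
  have hl := lagrange (c • x.rep) (c' • y.rep)
  rw [h1, h1'] at hl
  have : 1 - (inner ℝ (c • x.rep) (c' • y.rep) : ℝ)^2 = Ddet (c • x.rep) (c' • y.rep) ^2 := by
    nlinarith [hl]
  rw [this, Real.sqrt_sq_eq_abs]

lemma projDist_le_one (x y : RP1) : projDist x y ≤ 1 := by
  rw [projDist]
  calc Real.sqrt _ ≤ Real.sqrt 1 := Real.sqrt_le_sqrt (by nlinarith [sq_nonneg ((inner ℝ x.rep y.rep : ℝ) / (‖x.rep‖ * ‖y.rep‖))])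
  _ = 1 := Real.sqrt_one

lemma projDist_eq_norm_sub {x y : RP1} {w w' : E2} (hw : SpansLine w x) (hw' : SpansLine w' y)
    (h1 : ‖w‖ = 1) (h1' : ‖w'‖ = 1) :
    projDist x y = ‖w - (inner ℝ w w' : ℝ) • w'‖ := by
  rw [projDist_eq_abs_Ddet hw hw' h1 h1']
  have hsq : ‖w - (inner ℝ w w' : ℝ) • w'‖^2 = Ddet w w' ^ 2 := by
    have e1 := norm_sq_E2 (w - (inner ℝ w w' : ℝ) • w')
    have e2 := norm_sq_E2 w
    have e3 := norm_sq_E2 w'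
    rw [h1] at e2; rw [h1'] at e3
    have e4 := inner_E2 w w'
    have hc : ∀ j : Fin 2, (w - (inner ℝ w w' : ℝ) • w') j = w j - (inner ℝ w w' : ℝ) * w' j :=
      fun j => rfl
    rw [hc 0, hc 1] at e1
    rw [e1, Ddet, e4]
    linear_combination ((w 0^2 + w 1^2) - (w 0*w' 0 + w 1*w' 1)^2) * e3
  have h0 : (0:ℝ) ≤ ‖w - (inner ℝ w w' : ℝ) • w'‖ := norm_nonneg _
  have h0' : (0:ℝ) ≤ |Ddet w w'| := abs_nonneg _
  rw [← sq_abs (Ddet w w')] at hsq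
  nlinarith [hsq]


section Cocycle
variable {P : ℤ → Matrix (Fin 2) (Fin 2) ℝ} (hdet : ∀ i, (P i).det = 1)
include hdet

lemma det_fwd (n : ℕ) (i : ℤ) : (fwd P n i).det = 1 := by
  induction n generalizing i with
  | zero => simp [fwd]
  | succ n ih => rw [fwd, Matrix.det_mul, hdet, one_mul]; exact ih i

lemma isUnit_det_fwd (n : ℕ) (i : ℤ) : IsUnit (fwd P n i).det := by
  rw [det_fwd hdet]; exact isUnit_one

omit hdet in
lemma fwd_add (m n : ℕ) (i : ℤ) : fwd P (m + n) i = fwd P m (i + n) * fwd P n i := by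
  induction m with
  | zero => simp [fwd]
  | succ m ih =>
    have h1 : m + 1 + n = (m + n) + 1 := by omega
    have e : (i + ((m + n : ℕ) : ℤ)) = (i + (n:ℤ)) + (m:ℤ) := by push_cast; ring
    rw [h1, fwd, ih, fwd, mul_assoc, e]

omit hdet in
lemma bwd_eq_inv (n : ℕ) (i : ℤ) : bwd P n i = (fwd P n (i - n))⁻¹ := by
  induction n generalizing i with
  | zero => simp [bwd, fwd]
  | succ n ih =>
    have e1 : (i - 1 - (n:ℤ)) = i - ((n:ℕ)+1 : ℕ) := by push_cast; ring
    have e2 : (i - ((n:ℕ)+1 : ℕ) + (n:ℤ)) = i - 1 := by push_cast; ring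
    rw [bwd, ih, fwd, Matrix.mul_inv_rev, e1, e2]

lemma bwd_mulVecE_fwd (n : ℕ) (i : ℤ) (v : E2) :
    mulVecE (bwd P n (i + n)) (mulVecE (fwd P n i) v) = v := by
  rw [bwd_eq_inv]
  have h : (i : ℤ) + n - n = i := by push_cast; ring
  rw [h]
  exact matLin_leftInverse (isUnit_det_fwd hdet n i) v

omit hdet in
lemma matAct_one (x : RP1) : matAct 1 x = x := by
  induction x using Projectivization.ind with
  | h w hw =>
    rw [matAct_mk (by simp) w hw]
    exact (Projectivization.mk_eq_mk_iff' ℝ _ _ _ hw).2 ⟨1, by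
      rw [one_smul, mulVecE_one]⟩

variable {u : ℤ → RP1} (hu : ∀ i, matAct (P i) (u i) = u (i + 1))
include hu

lemma matAct_fwd (n : ℕ) (i : ℤ) : matAct (fwd P n i) (u i) = u (i + n) := by
  induction n with
  | zero => simpa [fwd] using matAct_one (u i)
  | succ n ih =>
    have e : (i + ((n:ℕ)+1 : ℕ) : ℤ) = (i + (n:ℤ)) + 1 := by push_cast; ring
    rw [fwd, matAct_mul (by rw [hdet]; exact isUnit_one) (isUnit_det_fwd hdet n i), ih, e,
      ← hu (i + n)]
end Cocycle


lemma norm_mulVecE_congr (A : Matrix (Fin 2) (Fin 2) ℝ) {w w' : E2} {x : RP1}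
    (h : SpansLine w x) (h' : SpansLine w' x) (h1 : ‖w‖ = 1) (h1' : ‖w'‖ = 1) :
    ‖mulVecE A w‖ = ‖mulVecE A w'‖ := by
  obtain ⟨c, hc, rfl⟩ := spansLine_pair_unit h h' h1 h1'
  rw [mulVecE_smul, norm_smul, Real.norm_eq_abs, hc, one_mul]

section Cocycle2
variable {P : ℤ → Matrix (Fin 2) (Fin 2) ℝ} (hdet : ∀ i, (P i).det = 1)
  {u : ℤ → RP1} (hu : ∀ i, matAct (P i) (u i) = u (i + 1))
include hdet hu

lemma spansLine_fwd (n : ℕ) (i : ℤ) {w : E2} (h : SpansLine w (u i)) :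
    SpansLine (mulVecE (fwd P n i) w) (u (i + n)) := by
  obtain ⟨hw, hmk⟩ := h
  refine ⟨mulVecE_ne_zero (isUnit_det_fwd hdet n i) hw, ?_⟩
  rw [← matAct_fwd hdet hu n i, ← hmk, matAct_mk (isUnit_det_fwd hdet n i) w hw]

/-- norm multiplicativity along an invariant direction -/
lemma norm_fwd_mul (m n : ℕ) (i : ℤ) {w w' : E2}
    (hw : SpansLine w (u i)) (h1 : ‖w‖ = 1)
    (hw' : SpansLine w' (u (i + n))) (h1' : ‖w'‖ = 1) :
    ‖mulVecE (fwd P (m + n) i) w‖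
      = ‖mulVecE (fwd P m (i + n)) w'‖ * ‖mulVecE (fwd P n i) w‖ := by
  set v := mulVecE (fwd P n i) w with hv
  have hsp : SpansLine v (u (i + n)) := spansLine_fwd hdet hu n i hw
  have hv0 : v ≠ 0 := hsp.1
  have hvn : ‖v‖ ≠ 0 := norm_ne_zero_iff.mpr hv0
  have hspn : SpansLine (‖v‖⁻¹ • v) (u (i + n)) := by
    obtain ⟨h0, hmk⟩ := hsp
    exact ⟨smul_ne_zero (inv_ne_zero hvn) h0, by
      rw [← hmk]
      exact (Projectivization.mk_eq_mk_iff' ℝ _ _ _ h0).2 ⟨‖v‖⁻¹, rfl⟩⟩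
  have hun : ‖(‖v‖⁻¹ • v)‖ = 1 := by
    rw [norm_smul, norm_inv, norm_norm, inv_mul_cancel₀ hvn]
  obtain ⟨c, hc, hcw⟩ := spansLine_pair_unit hspn hw' hun h1'
  have hvc : v = (‖v‖ * c) • w' := by
    have : ‖v‖ • (‖v‖⁻¹ • v) = ‖v‖ • (c • w') := by rw [hcw]
    rwa [smul_smul, smul_smul, mul_inv_cancel₀ hvn, one_smul] at this
  rw [fwd_add, mulVecE_mul, ← hv, hvc, mulVecE_smul, norm_smul]
  simp only [norm_smul, Real.norm_eq_abs, abs_mul, hc, h1', abs_norm, abs_abs, mul_one]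
  ring

/-- product formula over blocks of length `N` -/
lemma norm_fwd_prod (N k : ℕ) (i : ℤ) :
    ‖mulVecE (fwd P (k * N) i) (unitOf (u i))‖
      = ∏ j ∈ Finset.range k, ‖mulVecE (fwd P N (i + j * N)) (unitOf (u (i + j * N)))‖ := by
  induction k generalizing i with
  | zero => simp [fwd, mulVecE_one, norm_unitOf]
  | succ k ih =>
    have hk : (k + 1) * N = N + k * N := by ring
    have e : (i + ((k * N : ℕ) : ℤ)) = i + (k:ℤ) * N := by push_cast; ring
    rw [hk, norm_fwd_mul hdet hu N (k * N) i (spansLine_unitOf _) (norm_unitOf _)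
      (spansLine_unitOf _) (norm_unitOf _), ih, Finset.prod_range_succ, mul_comm, e]
end Cocycle2



lemma matOpNorm_fwd_le {P : ℤ → Matrix (Fin 2) (Fin 2) ℝ} {M : ℝ} (hM1 : 1 ≤ M)
    (hM : ∀ i, matOpNorm (P i) ≤ M) (n : ℕ) (i : ℤ) : matOpNorm (fwd P n i) ≤ M ^ n := by
  induction n generalizing i with
  | zero =>
    rw [fwd, pow_zero]
    apply matOpNorm_le_bound _ zero_le_one
    intro v; rw [mulVecE_one, one_mul]
  | succ n ih =>
    rw [fwd, pow_succ]
    calc matOpNorm _ ≤ matOpNorm (P (i + n)) * matOpNorm (fwd P n i) := matOpNorm_mul_le _ _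
    _ ≤ M ^ n * M ^ 1 := by
        rw [pow_one, mul_comm (M ^ n)]
        exact mul_le_mul (by simpa using hM (i + n)) (ih i) (matOpNorm_nonneg _)
          (le_trans zero_le_one hM1)
    _ = M ^ (n + 1) := by ring

/-- growth of the unstable direction under uniform hyperbolicity -/
lemma uh_growth {P : ℤ → Matrix (Fin 2) (Fin 2) ℝ} (hdet : ∀ i, (P i).det = 1)
    {u : ℤ → RP1} (hu : ∀ i, matAct (P i) (u i) = u (i + 1)) {C η : ℝ} (hC : 0 < C)
    (hb : ∀ i : ℤ, ∀ n : ℕ, ∀ w : E2, ‖w‖ = 1 → SpansLine w (u i) →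
      ‖mulVecE (bwd P n i) w‖ ≤ C / η ^ n)
    (hη : 1 < η) (n : ℕ) (i : ℤ) (w : E2) (h1 : ‖w‖ = 1) (hw : SpansLine w (u i)) :
    η ^ n / C ≤ ‖mulVecE (fwd P n i) w‖ := by
  set v := mulVecE (fwd P n i) w with hv
  have hsp : SpansLine v (u (i + n)) := spansLine_fwd hdet hu n i hw
  have hv0 : v ≠ 0 := hsp.1
  have hvn : (0:ℝ) < ‖v‖ := norm_pos_iff.mpr hv0
  have hspn : SpansLine (‖v‖⁻¹ • v) (u (i + n)) := spansLine_smul hsp (inv_ne_zero hvn.ne')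
  have hunit : ‖(‖v‖⁻¹ • v)‖ = 1 := by
    rw [norm_smul, norm_inv, norm_norm, inv_mul_cancel₀ hvn.ne']
  have hkey := hb (i + n) n _ hunit hspn
  have hbw : mulVecE (bwd P n (i + n)) (‖v‖⁻¹ • v) = ‖v‖⁻¹ • w := by
    rw [mulVecE_smul, hv, bwd_mulVecE_fwd hdet]
  rw [hbw, norm_smul, h1, mul_one, norm_inv, norm_norm] at hkey
  have hηn : (0:ℝ) < η ^ n := by positivity
  rw [div_le_iff₀ hC]
  have h3 := mul_le_mul_of_nonneg_right hkey hvn.le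
  rw [inv_mul_cancel₀ hvn.ne'] at h3
  rw [div_mul_eq_mul_div, le_div_iff₀ hηn] at h3
  nlinarith

lemma uh_to_ds {P : ℤ → Matrix (Fin 2) (Fin 2) ℝ} (hdet : ∀ i, (P i).det = 1)
    {M : ℝ} (hM1 : 1 ≤ M) (hM : ∀ i, matOpNorm (P i) ≤ M) (h : IsUH P) : IsDS P := by
  obtain ⟨u, s, hinv, C, hC, η, hη, hb⟩ := h
  have hu : ∀ i, matAct (P i) (u i) = u (i + 1) := fun i => (hinv i).1
  have hbu : ∀ i : ℤ, ∀ n : ℕ, ∀ w : E2, ‖w‖ = 1 → SpansLine w (u i) →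
      ‖mulVecE (bwd P n i) w‖ ≤ C / η ^ n := fun i n w h1 hw => (hb i n).1 w h1 hw
  obtain ⟨N₀, hN₀⟩ := pow_unbounded_of_one_lt (2 * C ^ 2) hη
  set N := N₀ + 1 with hN
  have hN1 : 1 ≤ N := Nat.le_add_left 1 N₀
  have hNb : 2 * C ^ 2 < η ^ N := lt_of_lt_of_le hN₀ (pow_le_pow_right₀ hη.le (Nat.le_succ N₀))
  have hηN : (1:ℝ) < η ^ N := one_lt_pow₀ hη (by omega)
  have hgrow := fun (i : ℤ) => uh_growth hdet hu hC hbu hη N i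
  -- the key strict inequality  η^N/C > 2 * (C/η^N)
  have hsep : 2 * (C / η ^ N) < η ^ N / C := by
    rw [mul_div_assoc', div_lt_div_iff₀ (by positivity) hC]
    nlinarith
  refine ⟨u, s, hinv, N, hN1, ⟨2, one_lt_two, ?_⟩, ?_, ?_⟩
  · -- (DS2)
    intro i w w' h1 h1' hw hw'
    have hgs := (hb i N).2 w' h1' hw'
    have := hgrow i w h1 hw
    calc 2 * ‖mulVecE (fwd P N i) w'‖ ≤ 2 * (C / η ^ N) := by linarith
    _ < η ^ N / C := hsep
    _ ≤ ‖mulVecE (fwd P N i) w‖ := this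
  · -- (DS3)
    set ε := η ^ N / C - C / η ^ N with hε
    have hεpos : 0 < ε := by
      have := hsep
      have h2 : 0 < C / η ^ N := by positivity
      simp only [hε]; nlinarith
    refine ⟨ε / M ^ N / 2, by positivity, fun i => ?_⟩
    set w := unitOf (u i)
    set w' := unitOf (s i)
    have h1 : ‖w‖ = 1 := norm_unitOf _
    have h1' : ‖w'‖ = 1 := norm_unitOf _
    set a : ℝ := (inner ℝ w w' : ℝ) with ha
    have haabs : |a| ≤ 1 := by
      have h2 := abs_real_inner_le_norm w w'
      rw [h1, h1', mul_one] at h2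
      exact h2
    have hdist : projDist (u i) (s i) = ‖w - a • w'‖ :=
      projDist_eq_norm_sub (spansLine_unitOf _) (spansLine_unitOf _) h1 h1'
    have hup : ‖mulVecE (fwd P N i) (w - a • w')‖ ≤ M ^ N * ‖w - a • w'‖ :=
      le_trans (norm_mulVecE_le _ _) (by
        have := matOpNorm_fwd_le hM1 hM N i
        have h0 : (0:ℝ) ≤ ‖w - a • w'‖ := norm_nonneg _
        nlinarith [matOpNorm_nonneg (fwd P N i)])
    have hlow : ε ≤ ‖mulVecE (fwd P N i) (w - a • w')‖ := by
      rw [mulVecE_sub, mulVecE_smul]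
      have hga := hgrow i w h1 (spansLine_unitOf _)
      have hgs := (hb i N).2 w' h1' (spansLine_unitOf _)
      have htri : ‖mulVecE (fwd P N i) w‖ - ‖a • mulVecE (fwd P N i) w'‖ ≤
          ‖mulVecE (fwd P N i) w - a • mulVecE (fwd P N i) w'‖ := by
        have := norm_sub_norm_le (mulVecE (fwd P N i) w) (a • mulVecE (fwd P N i) w')
        linarith
      have hsm : ‖a • mulVecE (fwd P N i) w'‖ ≤ C / η ^ N := by
        rw [norm_smul, Real.norm_eq_abs]
        have h0 : (0:ℝ) ≤ ‖mulVecE (fwd P N i) w'‖ := norm_nonneg _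
        nlinarith [abs_nonneg a]
      simp only [hε]; linarith
    have hMN : (0:ℝ) < M ^ N := by positivity
    rw [hdist]
    have : ε / M ^ N ≤ ‖w - a • w'‖ := by
      rw [div_le_iff₀ hMN]
      nlinarith
    have : ε / M ^ N / 2 < ε / M ^ N := by
      have : 0 < ε / M ^ N := by positivity
      linarith
    linarith
  · -- (DS4)
    refine ⟨η ^ N / C, by positivity, fun i => ?_⟩
    have hg := hgrow i (unitOf (u i)) (norm_unitOf (u i)) (spansLine_unitOf (u i))
    calc η ^ N / C ≤ ‖mulVecE (fwd P N i) (unitOf (u i))‖ := hg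
    _ ≤ matOpNorm (fwd P N i) := norm_le_matOpNorm (norm_unitOf _)


lemma le_of_sq_le_sq_nn {x y : ℝ} (h : x^2 ≤ y^2) (hx : 0 ≤ x) (hy : 0 ≤ y) : x ≤ y := by
  nlinarith

set_option maxHeartbeats 2000000 in
lemma ds_to_uh {P : ℤ → Matrix (Fin 2) (Fin 2) ℝ} (hdet : ∀ i, (P i).det = 1)
    {M : ℝ} (hM1 : 1 ≤ M) (hM : ∀ i, matOpNorm (P i) ≤ M) (h : IsDS P) : IsUH P := by
  obtain ⟨u, s, hinv, N, hN1, ⟨η, hη, hDS2⟩, ⟨δ, hδ, hDS3⟩, -⟩ := h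
  have hu : ∀ i, matAct (P i) (u i) = u (i + 1) := fun i => (hinv i).1
  have hs : ∀ i, matAct (P i) (s i) = s (i + 1) := fun i => (hinv i).2
  set a : ℤ → ℝ := fun i => ‖mulVecE (fwd P N i) (unitOf (s i))‖ with ha
  set b : ℤ → ℝ := fun i => ‖mulVecE (fwd P N i) (unitOf (u i))‖ with hbdef
  set d : ℤ → ℝ := fun i => projDist (u i) (s i) with hd
  have hδ1 : δ < 1 := lt_of_lt_of_le (hDS3 0) (projDist_le_one _ _)
  have hdpos : ∀ i, 0 < d i := fun i => lt_trans hδ (hDS3 i)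
  have hdle : ∀ i, d i ≤ 1 := fun i => projDist_le_one _ _
  have hapos : ∀ i, 0 < a i := fun i => norm_pos_iff.mpr
    (mulVecE_ne_zero (isUnit_det_fwd hdet N i) (spansLine_unitOf (s i)).1)
  have hbpos : ∀ i, 0 < b i := fun i => norm_pos_iff.mpr
    (mulVecE_ne_zero (isUnit_det_fwd hdet N i) (spansLine_unitOf (u i)).1)
  have hba : ∀ i, η * a i < b i := fun i => hDS2 i _ _ (norm_unitOf _) (norm_unitOf _)
    (spansLine_unitOf _) (spansLine_unitOf _)
  -- the key determinant identity: a i * b i * d (i+N) = d i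
  have hkey : ∀ i : ℤ, a i * b i * d (i + N) = d i := by
    intro i
    set X := mulVecE (fwd P N i) (unitOf (u i)) with hX
    set Y := mulVecE (fwd P N i) (unitOf (s i)) with hY
    have hXs : SpansLine X (u (i + N)) := spansLine_fwd hdet hu N i (spansLine_unitOf _)
    have hYs : SpansLine Y (s (i + N)) := spansLine_fwd hdet hs N i (spansLine_unitOf _)
    have hdi : d i = |Ddet (unitOf (u i)) (unitOf (s i))| :=
      projDist_eq_abs_Ddet (spansLine_unitOf _) (spansLine_unitOf _) (norm_unitOf _)
        (norm_unitOf _)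
    have hdN : d (i + N) = |Ddet (unitOf (u (i + N))) (unitOf (s (i + N)))| :=
      projDist_eq_abs_Ddet (spansLine_unitOf _) (spansLine_unitOf _) (norm_unitOf _)
        (norm_unitOf _)
    obtain ⟨c, hc0, hcX⟩ := spansLine_pair hXs (spansLine_unitOf (u (i + N)))
    obtain ⟨c', hc0', hcY⟩ := spansLine_pair hYs (spansLine_unitOf (s (i + N)))
    have hcn : |c| = b i := by
      have : ‖X‖ = |c| * ‖unitOf (u (i + N))‖ := by
        rw [hcX, norm_smul, Real.norm_eq_abs]
      rw [norm_unitOf, mul_one] at this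
      rw [hbdef]; exact this.symm
    have hcn' : |c'| = a i := by
      have : ‖Y‖ = |c'| * ‖unitOf (s (i + N))‖ := by
        rw [hcY, norm_smul, Real.norm_eq_abs]
      rw [norm_unitOf, mul_one] at this
      rw [ha]; exact this.symm
    have hD : Ddet X Y = Ddet (unitOf (u i)) (unitOf (s i)) := by
      rw [hX, hY, Ddet_mulVecE, det_fwd hdet N i, one_mul]
    calc a i * b i * d (i + N) = |c| * |c'| * |Ddet (unitOf (u (i+N))) (unitOf (s (i+N)))| := by
          rw [hcn, hcn', hdN]; ring
    _ = |Ddet (c • unitOf (u (i+N))) (c' • unitOf (s (i+N)))| := by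
          rw [Ddet_smul_left, Ddet_smul_right, abs_mul, abs_mul]; ring
    _ = |Ddet X Y| := by rw [← hcX, ← hcY]
    _ = d i := by rw [hD, ← hdi]
  -- stable product estimate
  have hstep_a : ∀ i : ℤ, η * a i ^ 2 * d (i + N) ≤ d i := by
    intro i
    have hh := mul_nonneg (mul_nonneg (hapos i).le (hdpos (i + N)).le)
      (sub_nonneg.mpr (hba i).le)
    nlinarith [hkey i, hh]
  have hstep_b : ∀ i : ℤ, η * d i ≤ b i ^ 2 * d (i + N) := by
    intro i
    have hh := mul_nonneg (mul_nonneg (hbpos i).le (hdpos (i + N)).le)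
      (sub_nonneg.mpr (hba i).le)
    nlinarith [hkey i, hh]
  have hS : ∀ k : ℕ, ∀ i : ℤ,
      η ^ k * (∏ j ∈ Finset.range k, a (i + j * N)) ^ 2 * d (i + k * N) ≤ d i := by
    intro k
    induction k with
    | zero => intro i; simp
    | succ k ih =>
      intro i
      have e1 : (i + (k:ℤ) * N) + (N:ℤ) = i + ((k:ℕ)+1 : ℕ) * N := by push_cast; ring
      have h1 := hstep_a (i + (k:ℤ) * N)
      rw [e1] at h1
      have h2 := ih i
      rw [Finset.prod_range_succ, pow_succ]
      nlinarith [pow_pos (lt_trans one_pos hη) k,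
        sq_nonneg (∏ j ∈ Finset.range k, a (i + j * N)), (hdpos (i + ((k:ℕ)+1 : ℕ) * N)).le,
        mul_le_mul_of_nonneg_left h1
          (mul_nonneg (pow_pos (lt_trans one_pos hη) k).le
            (sq_nonneg (∏ j ∈ Finset.range k, a (i + j * N))))]
  have hU : ∀ k : ℕ, ∀ i : ℤ,
      η ^ k * d i ≤ (∏ j ∈ Finset.range k, b (i + j * N)) ^ 2 * d (i + k * N) := by
    intro k
    induction k with
    | zero => intro i; simp
    | succ k ih =>
      intro i
      have e1 : (i + (k:ℤ) * N) + (N:ℤ) = i + ((k:ℕ)+1 : ℕ) * N := by push_cast; ring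
      have h1 := hstep_b (i + (k:ℤ) * N)
      rw [e1] at h1
      have h2 := ih i
      rw [Finset.prod_range_succ, pow_succ]
      nlinarith [pow_pos (lt_trans one_pos hη) k,
        sq_nonneg (∏ j ∈ Finset.range k, b (i + j * N)), (hdpos (i + ((k:ℕ)+1 : ℕ) * N)).le,
        (hdpos (i + (k:ℤ) * N)).le, (hbpos (i + (k:ℤ) * N)).le,
        mul_le_mul_of_nonneg_left h1 (sq_nonneg (∏ j ∈ Finset.range k, b (i + j * N)))]
  have hAbound : ∀ k : ℕ, ∀ i : ℤ,
      η ^ k * (∏ j ∈ Finset.range k, a (i + j * N)) ^ 2 * δ ≤ 1 := by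
    intro k i
    have h1 := hS k i
    have h2 := hdle i
    have h3 := (hDS3 (i + k * N)).le
    nlinarith [pow_pos (lt_trans one_pos hη) k, sq_nonneg (∏ j ∈ Finset.range k, a (i + j * N))]
  have hBbound : ∀ k : ℕ, ∀ i : ℤ,
      η ^ k * δ ≤ (∏ j ∈ Finset.range k, b (i + j * N)) ^ 2 := by
    intro k i
    have h1 := hU k i
    have h2 := hdle (i + k * N)
    have h3 := (hDS3 i).le
    nlinarith [pow_pos (lt_trans one_pos hη) k, sq_nonneg (∏ j ∈ Finset.range k, b (i + j * N))]
  -- set up the constants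
  have hNpos : (0:ℝ) < N := by exact_mod_cast hN1
  have hη0 : (0:ℝ) < η := lt_trans one_pos hη
  set ηc : ℝ := η ^ ((2*(N:ℝ))⁻¹ : ℝ) with hηc
  have hηc1 : 1 < ηc := by
    rw [hηc, Real.one_lt_rpow_iff_of_pos hη0]
    left; exact ⟨hη, by positivity⟩
  have hηcpos : (0:ℝ) < ηc := lt_trans one_pos hηc1
  set Csl : ℝ := M ^ N * Real.sqrt (η/δ) with hCsl
  have hCpos : 0 < Csl := by
    rw [hCsl]
    have : (0:ℝ) < Real.sqrt (η/δ) := Real.sqrt_pos.mpr (by positivity)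
    positivity
  have hCsq : Csl ^ 2 = (M ^ N) ^ 2 * (η/δ) := by
    rw [hCsl, mul_pow, Real.sq_sqrt (by positivity)]
  -- power comparison
  have hpow : ∀ n k : ℕ, n ≤ N * (k+1) → (ηc ^ n) ^ 2 ≤ η ^ (k+1) := by
    intro n k hn
    have e1 : (ηc ^ n) ^ 2 = ηc ^ (2*n) := by rw [← pow_mul]; ring_nf
    have e2 : ηc ^ (2*n) = η ^ (((2*(N:ℝ))⁻¹ : ℝ) * ((2*n : ℕ) : ℝ)) := by
      rw [hηc, ← Real.rpow_natCast (η ^ ((2*(N:ℝ))⁻¹ : ℝ)) (2*n), ← Real.rpow_mul hη0.le]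
    have e3 : (η : ℝ) ^ (((k:ℕ)+1 : ℕ) : ℝ) = η ^ (k+1) := Real.rpow_natCast η (k+1)
    rw [e1, e2, ← e3]
    apply Real.rpow_le_rpow_of_exponent_le hη.le
    rw [inv_mul_le_iff₀ (by positivity)]
    have hn' : (n:ℝ) ≤ (N:ℝ) * ((k:ℝ)+1) := by exact_mod_cast hn
    push_cast
    nlinarith [hNpos]
  refine ⟨u, s, hinv, Csl, hCpos, ηc, hηc1, fun i n => ⟨?_, ?_⟩⟩
  · -- unstable direction: backward contraction
    intro w h1 hw
    set k := n / N with hk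
    set r := n % N with hr
    have hnrk : r + k * N = n := Nat.mod_add_div' n N
    have hrN : r < N := Nat.mod_lt _ (by omega)
    set j : ℤ := i - n with hj
    have hji : j + (n:ℤ) = i := by rw [hj]; ring
    set v := mulVecE (fwd P n j) (unitOf (u j)) with hv
    have hsp : SpansLine v (u i) := by
      have := spansLine_fwd hdet hu n j (spansLine_unitOf (u j))
      rwa [hji] at this
    have hv0 : v ≠ 0 := hsp.1
    have hvpos : (0:ℝ) < ‖v‖ := norm_pos_iff.mpr hv0
    -- factor the norm of v
    have ecast : ((k * N : ℕ) : ℤ) = (k:ℤ) * N := by push_cast; ring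
    have hsplit : ‖v‖ = ‖mulVecE (fwd P r (j + (k*N : ℕ))) (unitOf (u (j + (k*N : ℕ))))‖
        * ‖mulVecE (fwd P (k*N) j) (unitOf (u j))‖ := by
      rw [hv, ← hnrk]
      exact norm_fwd_mul hdet hu r (k*N) j (spansLine_unitOf _) (norm_unitOf _)
        (spansLine_unitOf _) (norm_unitOf _)
    set t := ‖mulVecE (fwd P r (j + (k*N : ℕ))) (unitOf (u (j + (k*N : ℕ))))‖ with ht
    have htpos : (0:ℝ) ≤ t := norm_nonneg _
    have htlow : 1 ≤ M ^ N * t := by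
      have h2 := one_le_matOpNorm_mul_norm (det_fwd hdet r (j + (k*N : ℕ))) (norm_unitOf
        (u (j + (k*N : ℕ))))
      have h3 : matOpNorm (fwd P r (j + (k*N : ℕ))) ≤ M ^ r := matOpNorm_fwd_le hM1 hM r _
      have h4 : M ^ r ≤ M ^ N := pow_le_pow_right₀ hM1 hrN.le
      nlinarith [matOpNorm_nonneg (fwd P r (j + (k*N : ℕ)))]
    have hprod : ‖mulVecE (fwd P (k*N) j) (unitOf (u j))‖
        = ∏ jj ∈ Finset.range k, b (j + jj * N) := by
      rw [norm_fwd_prod hdet hu N k j, hbdef]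
    set B := ∏ jj ∈ Finset.range k, b (j + jj * N) with hB
    have hBpos : 0 < B := Finset.prod_pos (fun jj _ => hbpos _)
    have hvB : ‖v‖ = t * B := by rw [hsplit, hprod]
    -- value of bwd on w
    have hspn : SpansLine (‖v‖⁻¹ • v) (u i) := spansLine_smul hsp (inv_ne_zero hvpos.ne')
    have hunit : ‖(‖v‖⁻¹ • v)‖ = 1 := by
      rw [norm_smul, norm_inv, norm_norm, inv_mul_cancel₀ hvpos.ne']
    obtain ⟨c, hc, hcw⟩ := spansLine_pair_unit hw hspn h1 hunit
    have hbwv : mulVecE (bwd P n i) v = unitOf (u j) := by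
      conv_lhs => rw [← hji, hv]
      exact bwd_mulVecE_fwd hdet n j (unitOf (u j))
    have hval : ‖mulVecE (bwd P n i) w‖ = ‖v‖⁻¹ := by
      rw [hcw, mulVecE_smul, mulVecE_smul, hbwv, norm_smul, norm_smul, Real.norm_eq_abs, hc,
        one_mul, norm_inv, norm_norm, norm_unitOf, mul_one]
    rw [hval]
    -- squared estimate
    have hsq : (ηc ^ n) ^ 2 ≤ (Csl * ‖v‖) ^ 2 := by
      have hnle : n ≤ N * (k+1) := by
        have h2 : n < N + k * N := by
          rw [← hnrk]; exact Nat.add_lt_add_right hrN _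
        have h3 : N + k * N = N * (k+1) := by ring
        exact h3 ▸ h2.le
      have h5 := hpow n k hnle
      have h6 := hBbound k j
      rw [← hB] at h6
      have h7 : (1:ℝ) ≤ (M ^ N * t)^2 := by nlinarith
      have h8 : η ^ (k+1) ≤ (M ^ N * t)^2 * ((η/δ) * B^2) := by
        have hδ0 : δ ≠ 0 := hδ.ne'
        have e : η ^ (k+1) = 1 * ((η/δ) * (η ^ k * δ)) := by
          field_simp; ring
        rw [e]
        apply mul_le_mul h7 (mul_le_mul_of_nonneg_left h6 (by positivity)) (by positivity)
          (sq_nonneg _)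
      calc (ηc ^ n) ^ 2 ≤ η ^ (k+1) := h5
      _ ≤ (M ^ N * t)^2 * ((η/δ) * B^2) := h8
      _ = (Csl * ‖v‖) ^ 2 := by
        rw [hvB]
        linear_combination (-(t^2*B^2)) * hCsq
    have hle : ηc ^ n ≤ Csl * ‖v‖ :=
      le_of_sq_le_sq_nn hsq (pow_pos hηcpos n).le
        (mul_nonneg hCpos.le hvpos.le)
    rw [inv_eq_one_div, div_le_div_iff₀ hvpos (pow_pos hηcpos n)]
    linarith
  · -- stable direction: forward contraction
    intro w h1 hw
    set k := n / N with hk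
    set r := n % N with hr
    have hnrk : r + k * N = n := Nat.mod_add_div' n N
    have hrN : r < N := Nat.mod_lt _ (by omega)
    have hcongr : ‖mulVecE (fwd P n i) w‖ = ‖mulVecE (fwd P n i) (unitOf (s i))‖ :=
      norm_mulVecE_congr _ hw (spansLine_unitOf _) h1 (norm_unitOf _)
    have hsplit : ‖mulVecE (fwd P n i) (unitOf (s i))‖
        = ‖mulVecE (fwd P r (i + (k*N : ℕ))) (unitOf (s (i + (k*N : ℕ))))‖
          * ‖mulVecE (fwd P (k*N) i) (unitOf (s i))‖ := by
      rw [← hnrk]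
      exact norm_fwd_mul hdet hs r (k*N) i (spansLine_unitOf _) (norm_unitOf _)
        (spansLine_unitOf _) (norm_unitOf _)
    set t := ‖mulVecE (fwd P r (i + (k*N : ℕ))) (unitOf (s (i + (k*N : ℕ))))‖ with ht
    have htpos : (0:ℝ) ≤ t := norm_nonneg _
    have htup : t ≤ M ^ N := by
      have h3 : matOpNorm (fwd P r (i + (k*N : ℕ))) ≤ M ^ r := matOpNorm_fwd_le hM1 hM r _
      have h4 : M ^ r ≤ M ^ N := pow_le_pow_right₀ hM1 hrN.le
      have h5 := norm_le_matOpNorm (A := fwd P r (i + (k*N : ℕ))) (norm_unitOf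
        (s (i + (k*N : ℕ))))
      linarith
    have hprod : ‖mulVecE (fwd P (k*N) i) (unitOf (s i))‖
        = ∏ jj ∈ Finset.range k, a (i + jj * N) := by
      rw [norm_fwd_prod hdet hs N k i, ha]
    set A := ∏ jj ∈ Finset.range k, a (i + jj * N) with hA
    have hApos : 0 < A := Finset.prod_pos (fun jj _ => hapos _)
    have hvA : ‖mulVecE (fwd P n i) w‖ = t * A := by rw [hcongr, hsplit, hprod]
    rw [hvA]
    -- squared estimate
    have hsq : (t * A * ηc ^ n) ^ 2 ≤ Csl ^ 2 := by
      have hnle : n ≤ N * (k+1) := by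
        have h2 : n < N + k * N := by
          rw [← hnrk]; exact Nat.add_lt_add_right hrN _
        have h3 : N + k * N = N * (k+1) := by ring
        exact h3 ▸ h2.le
      have h5 := hpow n k hnle
      have h6 := hAbound k i
      rw [← hA] at h6
      have h8 : (ηc ^ n)^2 * A^2 ≤ η ^ (k+1) * A^2 :=
        mul_le_mul_of_nonneg_right h5 (sq_nonneg A)
      have h9 : η ^ (k+1) * A^2 ≤ η / δ := by
        rw [pow_succ, le_div_iff₀ hδ]
        calc η ^ k * η * A^2 * δ = (η ^ k * A^2 * δ) * η := by ring
        _ ≤ 1 * η := mul_le_mul_of_nonneg_right h6 hη0.le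
        _ = η := one_mul η
      have h10 : t^2 ≤ (M ^ N)^2 := by nlinarith [pow_pos (lt_of_lt_of_le one_pos hM1) N]
      calc (t * A * ηc ^ n)^2 = t^2 * ((ηc ^ n)^2 * A^2) := by ring
      _ ≤ (M ^ N)^2 * (η / δ) :=
        mul_le_mul h10 (h8.trans h9) (mul_nonneg (sq_nonneg _) (sq_nonneg _)) (sq_nonneg _)
      _ = Csl ^ 2 := hCsq.symm
    have hle : t * A * ηc ^ n ≤ Csl :=
      le_of_sq_le_sq_nn hsq (mul_nonneg (mul_nonneg htpos hApos.le) (pow_pos hηcpos n).le)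
        hCpos.le
    rw [le_div_iff₀ (pow_pos hηcpos n)]
    exact hle

theorem stmt_3 (P : ℤ → Matrix.SpecialLinearGroup (Fin 2) ℝ)
    (hbdd : ∃ C : ℝ, ∀ i : ℤ, matOpNorm (P i : Matrix (Fin 2) (Fin 2) ℝ) ≤ C) :
    IsUH (fun i => (P i : Matrix (Fin 2) (Fin 2) ℝ)) ↔
      IsDS (fun i => (P i : Matrix (Fin 2) (Fin 2) ℝ)) := by
  obtain ⟨C, hC⟩ := hbdd
  set M := max C 1 with hMdef
  have hM1 : 1 ≤ M := le_max_right _ _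
  have hM : ∀ i : ℤ, matOpNorm ((fun i => (P i : Matrix (Fin 2) (Fin 2) ℝ)) i) ≤ M :=
    fun i => le_trans (hC i) (le_max_left _ _)
  have hdet : ∀ i : ℤ, ((fun i => (P i : Matrix (Fin 2) (Fin 2) ℝ)) i).det = 1 :=
    fun i => (P i).property
  exact ⟨fun h => uh_to_ds hdet hM1 hM h, fun h => ds_to_uh hdet hM1 hM h⟩
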